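/- arXiv:2204.05100 — 3 statements merged into one kernel-verified Lean document; each statement's English description precedes it below -/
import Mathlib

section
/- Let ζ be a primitive 14th root of unity in ℂ. Suppose rational numbers m₁,…,m₆ and α satisfy m₁ = 4*α - 2*m₄ + m₅, m₂ = 1 - 2*m₅ + 3*m₄, and m₆ = 8*m₄ + 4 - 2*m₃ - 2*α - 4*m₅. Then the holomorphic Lefschetz identity holds: 1 + ζ^13 = Σ_{i=1}^{6} m_i / ((1 - ζ^{1+i})*(1 - ζ^{14-i})) + α*(1 + ζ)/(1 - ζ)². -/
theorem holomorphic_lefschetz_order_14 (ζ : ℂ) (hζ : IsPrimitiveRoot ζ 14)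
    (m₁ m₂ m₃ m₄ m₅ m₆ α : ℚ)
    (h1 : m₁ = 4 * α - 2 * m₄ + m₅)
    (h2 : m₂ = 1 - 2 * m₅ + 3 * m₄)
    (h3 : m₆ = 8 * m₄ + 4 - 2 * m₃ - 2 * α - 4 * m₅) :
    1 + ζ ^ 13 =
      (m₁ : ℂ) / ((1 - ζ ^ 2) * (1 - ζ ^ 13))
      + (m₂ : ℂ) / ((1 - ζ ^ 3) * (1 - ζ ^ 12))
      + (m₃ : ℂ) / ((1 - ζ ^ 4) * (1 - ζ ^ 11))
      + (m₄ : ℂ) / ((1 - ζ ^ 5) * (1 - ζ ^ 10))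
      + (m₅ : ℂ) / ((1 - ζ ^ 6) * (1 - ζ ^ 9))
      + (m₆ : ℂ) / ((1 - ζ ^ 7) * (1 - ζ ^ 8))
      + (α : ℂ) * (1 + ζ) / (1 - ζ) ^ 2 := by
  have h1' : (m₁ : ℂ) = 4 * (α : ℂ) - 2 * m₄ + m₅ := by exact_mod_cast congrArg (Rat.cast (K := ℂ)) h1
  have h2' : (m₂ : ℂ) = 1 - 2 * (m₅ : ℂ) + 3 * m₄ := by exact_mod_cast congrArg (Rat.cast (K := ℂ)) h2
  have h3' : (m₆ : ℂ) = 8 * (m₄ : ℂ) + 4 - 2 * m₃ - 2 * α - 4 * m₅ := by exact_mod_cast congrArg (Rat.cast (K := ℂ)) h3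
  have h14 : ζ ^ 14 = 1 := hζ.pow_eq_one
  have h7 : ζ ^ 7 = -1 := by
    have h := mul_eq_zero.1 (show (ζ ^ 7 - 1) * (ζ ^ 7 + 1) = 0 by linear_combination h14)
    rcases h with h | h
    · exact absurd (by linear_combination h) (hζ.pow_ne_one_of_pos_of_lt (l := 7) (by norm_num) (by norm_num))
    · linear_combination h
  have hz1 : ζ + 1 ≠ 0 := by
    intro h
    exact (hζ.pow_ne_one_of_pos_of_lt (l := 2) (by norm_num) (by norm_num))
      (by linear_combination (ζ - 1) * h)
  have hmin : ζ ^ 6 - ζ ^ 5 + ζ ^ 4 - ζ ^ 3 + ζ ^ 2 - ζ + 1 = 0 := by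
    apply mul_left_cancel₀ hz1
    rw [mul_zero]
    linear_combination h7
  have hne : ∀ k : ℕ, 0 < k → k < 14 → 1 - ζ ^ k ≠ 0 := by
    intro k hk hk14 h
    exact (hζ.pow_ne_one_of_pos_of_lt hk.ne' hk14) (by linear_combination -h)
  have e1 : (m₁ : ℂ) / ((1 - ζ ^ 2) * (1 - ζ ^ 13)) = (m₁ : ℂ) * ((12/7 : ℂ) + (-3/7 : ℂ) * ζ + (8/7 : ℂ) * ζ ^ 2 + (-6/7 : ℂ) * ζ ^ 3 + (4/7 : ℂ) * ζ ^ 4 + (-9/7 : ℂ) * ζ ^ 5) := by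
    rw [div_eq_iff (mul_ne_zero (hne 2 (by norm_num) (by norm_num)) (hne 13 (by norm_num) (by norm_num)))]
    linear_combination (-(m₁ : ℂ) * ((5/7 : ℂ) + (2/7 : ℂ) * ζ + (-1 : ℂ) * ζ ^ 2 + (-1 : ℂ) * ζ ^ 3 + (-1 : ℂ) * ζ ^ 4 + (-1 : ℂ) * ζ ^ 5 + (-1 : ℂ) * ζ ^ 6 + (1 : ℂ) * ζ ^ 8 + (1 : ℂ) * ζ ^ 9 + (1 : ℂ) * ζ ^ 10 + (1 : ℂ) * ζ ^ 11 + (1 : ℂ) * ζ ^ 12 + (-5/7 : ℂ) * ζ ^ 13 + (-9/7 : ℂ) * ζ ^ 14)) * hmin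
  have e2 : (m₂ : ℂ) / ((1 - ζ ^ 3) * (1 - ζ ^ 12)) = (m₂ : ℂ) * ((2/7 : ℂ) + (3/7 : ℂ) * ζ + (-1/7 : ℂ) * ζ ^ 2 + (-1/7 : ℂ) * ζ ^ 3 + (3/7 : ℂ) * ζ ^ 4 + (-5/7 : ℂ) * ζ ^ 5) := by
    rw [div_eq_iff (mul_ne_zero (hne 3 (by norm_num) (by norm_num)) (hne 12 (by norm_num) (by norm_num)))]
    linear_combination (-(m₂ : ℂ) * ((-5/7 : ℂ) + (-2/7 : ℂ) * ζ + (2/7 : ℂ) * ζ ^ 2 + (-4/7 : ℂ) * ζ ^ 3 + (-3/7 : ℂ) * ζ ^ 4 + (-4/7 : ℂ) * ζ ^ 5 + (-3/7 : ℂ) * ζ ^ 6 + (3/7 : ℂ) * ζ ^ 7 + (4/7 : ℂ) * ζ ^ 8 + (3/7 : ℂ) * ζ ^ 9 + (4/7 : ℂ) * ζ ^ 10 + (3/7 : ℂ) * ζ ^ 11 + (2/7 : ℂ) * ζ ^ 12 + (-2/7 : ℂ) * ζ ^ 13 + (-5/7 : ℂ) * ζ ^ 14)) * hmin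
  have e3 : (m₃ : ℂ) / ((1 - ζ ^ 4) * (1 - ζ ^ 11)) = (m₃ : ℂ) * ((6/7 : ℂ) + (-5/7 : ℂ) * ζ + (4/7 : ℂ) * ζ ^ 2 + (-3/7 : ℂ) * ζ ^ 3 + (2/7 : ℂ) * ζ ^ 4 + (-1/7 : ℂ) * ζ ^ 5) := by
    rw [div_eq_iff (mul_ne_zero (hne 4 (by norm_num) (by norm_num)) (hne 11 (by norm_num) (by norm_num)))]
    linear_combination (-(m₃ : ℂ) * ((-1/7 : ℂ) + (-6/7 : ℂ) * ζ + (-1/7 : ℂ) * ζ ^ 2 + (1/7 : ℂ) * ζ ^ 3 + (-1 : ℂ) * ζ ^ 4 + (1 : ℂ) * ζ ^ 8 + (1/7 : ℂ) * ζ ^ 11 + (-1/7 : ℂ) * ζ ^ 12 + (1/7 : ℂ) * ζ ^ 13 + (-1/7 : ℂ) * ζ ^ 14)) * hmin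
  have e4 : (m₄ : ℂ) / ((1 - ζ ^ 5) * (1 - ζ ^ 10)) = (m₄ : ℂ) * ((-6/7 : ℂ) + (5/7 : ℂ) * ζ + (3/7 : ℂ) * ζ ^ 2 + (3/7 : ℂ) * ζ ^ 3 + (-9/7 : ℂ) * ζ ^ 4 + (1/7 : ℂ) * ζ ^ 5) := by
    rw [div_eq_iff (mul_ne_zero (hne 5 (by norm_num) (by norm_num)) (hne 10 (by norm_num) (by norm_num)))]
    linear_combination (-(m₄ : ℂ) * ((-13/7 : ℂ) + (-8/7 : ℂ) * ζ + (8/7 : ℂ) * ζ ^ 2 + (6/7 : ℂ) * ζ ^ 3 + (-6/7 : ℂ) * ζ ^ 4 + (-2/7 : ℂ) * ζ ^ 5 + (2/7 : ℂ) * ζ ^ 6 + (5/7 : ℂ) * ζ ^ 7 + (2/7 : ℂ) * ζ ^ 8 + (-2/7 : ℂ) * ζ ^ 9 + (8/7 : ℂ) * ζ ^ 10 + (6/7 : ℂ) * ζ ^ 11 + (-6/7 : ℂ) * ζ ^ 12 + (-8/7 : ℂ) * ζ ^ 13 + (1/7 : ℂ) * ζ ^ 14)) * hmin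
  have e5 : (m₅ : ℂ) / ((1 - ζ ^ 6) * (1 - ζ ^ 9)) = (m₅ : ℂ) * ((4/7 : ℂ) + (-1/7 : ℂ) * ζ + (-2/7 : ℂ) * ζ ^ 2 + (-2/7 : ℂ) * ζ ^ 3 + (6/7 : ℂ) * ζ ^ 4 + (-3/7 : ℂ) * ζ ^ 5) := by
    rw [div_eq_iff (mul_ne_zero (hne 6 (by norm_num) (by norm_num)) (hne 9 (by norm_num) (by norm_num)))]
    linear_combination (-(m₅ : ℂ) * ((-3/7 : ℂ) + (-4/7 : ℂ) * ζ + (-3/7 : ℂ) * ζ ^ 2 + (-4/7 : ℂ) * ζ ^ 3 + (4/7 : ℂ) * ζ ^ 4 + (3/7 : ℂ) * ζ ^ 5 + (-1 : ℂ) * ζ ^ 6 + (1 : ℂ) * ζ ^ 8 + (3/7 : ℂ) * ζ ^ 9 + (-3/7 : ℂ) * ζ ^ 10 + (-4/7 : ℂ) * ζ ^ 11 + (4/7 : ℂ) * ζ ^ 12 + (3/7 : ℂ) * ζ ^ 13 + (-3/7 : ℂ) * ζ ^ 14)) * hmin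
  have e6 : (m₆ : ℂ) / ((1 - ζ ^ 7) * (1 - ζ ^ 8)) = (m₆ : ℂ) * ((3/7 : ℂ) + (-5/14 : ℂ) * ζ + (2/7 : ℂ) * ζ ^ 2 + (-3/14 : ℂ) * ζ ^ 3 + (1/7 : ℂ) * ζ ^ 4 + (-1/14 : ℂ) * ζ ^ 5) := by
    rw [div_eq_iff (mul_ne_zero (hne 7 (by norm_num) (by norm_num)) (hne 8 (by norm_num) (by norm_num)))]
    linear_combination (-(m₆ : ℂ) * ((-4/7 : ℂ) + (-13/14 : ℂ) * ζ + (-1/14 : ℂ) * ζ ^ 2 + (1/14 : ℂ) * ζ ^ 3 + (-1/14 : ℂ) * ζ ^ 4 + (1/14 : ℂ) * ζ ^ 5 + (-1/14 : ℂ) * ζ ^ 6 + (1/7 : ℂ) * ζ ^ 7 + (3/7 : ℂ) * ζ ^ 8 + (1/14 : ℂ) * ζ ^ 9 + (-1/14 : ℂ) * ζ ^ 10 + (1/14 : ℂ) * ζ ^ 11 + (-1/14 : ℂ) * ζ ^ 12 + (1/14 : ℂ) * ζ ^ 13 + (-1/14 : ℂ) * ζ ^ 14)) * hmin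
  have ea : (α : ℂ) * (1 + ζ) / (1 - ζ) ^ 2 = (α : ℂ) * ((-6 : ℂ) + (1 : ℂ) * ζ + (-4 : ℂ) * ζ ^ 2 + (3 : ℂ) * ζ ^ 3 + (-2 : ℂ) * ζ ^ 4 + (5 : ℂ) * ζ ^ 5) := by
    rw [div_eq_iff (pow_ne_zero 2 (by simpa using hne 1 (by norm_num) (by norm_num)))]
    linear_combination (-(α : ℂ) * ((-7 : ℂ) + (5 : ℂ) * ζ)) * hmin
  rw [e1, e2, e3, e4, e5, e6, ea]
  linear_combination (-(1:ℂ) * ((1 : ℂ) + (-1 : ℂ) * ζ ^ 6 + (-1 : ℂ) * ζ ^ 7)) * hmin + (-(((12/7 : ℂ) + (-3/7 : ℂ) * ζ + (8/7 : ℂ) * ζ ^ 2 + (-6/7 : ℂ) * ζ ^ 3 + (4/7 : ℂ) * ζ ^ 4 + (-9/7 : ℂ) * ζ ^ 5))) * h1' + (-(((2/7 : ℂ) + (3/7 : ℂ) * ζ + (-1/7 : ℂ) * ζ ^ 2 + (-1/7 : ℂ) * ζ ^ 3 + (3/7 : ℂ) * ζ ^ 4 + (-5/7 : ℂ) * ζ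 ^ 5))) * h2' + (-(((3/7 : ℂ) + (-5/14 : ℂ) * ζ + (2/7 : ℂ) * ζ ^ 2 + (-3/14 : ℂ) * ζ ^ 3 + (1/7 : ℂ) * ζ ^ 4 + (-1/14 : ℂ) * ζ ^ 5))) * h3'
end

section
/- There is no tuple (d₂₁, d₇, d₃, d₁, N₃) of nonnegative integers satisfying all of: d₃ ≥ 1, d₁ ≥ 1, d₃ + d₁ = 4, d₂₁ + d₇ = 3, 2 - (2*d₂₁ + d₇) + 2*d₃ + d₁ = 3, and 2 - 6*(d₂₁ - d₇) - d₃ + d₁ = 3*N₃ - 6. (Consequently, for a non-symplectic automorphism of order 21 on a K3 surface, the power of order 7 cannot be symplectic.) -/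
theorem order_21_cube_not_symplectic :
    ¬ ∃ d21 d7 d3 d1 N3 : ℕ,
      1 ≤ d3 ∧ 1 ≤ d1 ∧ d3 + d1 = 4 ∧ d21 + d7 = 3 ∧
      (2 : ℤ) - (2 * d21 + d7) + 2 * d3 + d1 = 3 ∧
      (2 : ℤ) - 6 * ((d21 : ℤ) - d7) - d3 + d1 = 3 * N3 - 6 := by
  rintro ⟨d21, d7, d3, d1, N3, h3, h1, hs, ht, e1, e2⟩
  omega
end

section
/- The unique tuple (d₂₈, d₁₄, d₇, d₄, d₂, d₁) of nonnegative integers satisfying 6*d₇ + d₁ = 8, 12*d₂₈ + 6*d₁₄ + 2*d₄ + d₂ = 14, d₇ ≥ 1, and 2 + d₁₄ - d₇ - d₂ + d₁ = 4, is (0, 1, 1, 4, 0, 2); and for this tuple the quantity 2 + 2*d₂₈ - d₁₄ - d₇ - 2*d₄ + d₂ + d₁ equals -6. (Since the Euler characteristic of the fixed locus of a non-symplectic order-14 automorphism is positive, a non-symplectic order-28 automorphism on a K3 surface cannot have symplectic 7th power.) -/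
theorem order_28_fourth_power_symplectic_case :
    (∀ d28 d14 d7 d4 d2 d1 : ℕ,
      (6 * d7 + d1 = 8 ∧ 12 * d28 + 6 * d14 + 2 * d4 + d2 = 14 ∧ 1 ≤ d7 ∧
        (2 : ℤ) + d14 - d7 - d2 + d1 = 4) ↔
      (d28, d14, d7, d4, d2, d1) = (0, 1, 1, 4, 0, 2)) ∧
    (2 : ℤ) + 2 * 0 - 1 - 1 - 2 * 4 + 0 + 2 = -6 := by
  refine ⟨fun d28 d14 d7 d4 d2 d1 => ?_, by norm_num⟩
  simp only [Prod.mk.injEq]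
  omega
end
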